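/- For each nonnegative integer M and each eigenvalue k(k+1) of A_M (0 ≤ k ≤ M), the eigenvector α of A_M with eigenvalue k(k+1) normalized so that α_M = 1 has α_0 = (-1)^{M-k} M!; in particular in the recorded cases M ≤ 4 the first component is ± M!. -/

import Mathlib

lemma ch1 (k j : ℕ) (h : j ≤ k) :
    ((k.choose (j+1)):ℝ) * ((j:ℝ)+1) = (k.choose j : ℝ) * ((k:ℝ) - j) := by
  have h1 : (((k.choose (j+1)) * (j+1) : ℕ) : ℝ) = (((k.choose j) * (k - j) : ℕ) : ℝ) :=
    Nat.cast_inj.mpr (Nat.choose_succ_right_eq k j)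
  push_cast [Nat.cast_sub h] at h1
  linarith

lemma ch2 (m r : ℕ) : ((m+1).choose (r+1) : ℝ) * ((r:ℝ)+1) = ((m:ℝ)+1) * (m.choose r : ℝ) := by
  have h1 : (((m+1) * m.choose r : ℕ) : ℝ) = (((m+1).choose (r+1) * (r+1) : ℕ) : ℝ) :=
    Nat.cast_inj.mpr (by simpa [Nat.succ_eq_add_one] using Nat.add_one_mul_choose_eq m r)
  push_cast at h1
  linarith

lemma ch3 (m r : ℕ) : ((m+1).choose (r+1) : ℝ) = (m.choose r : ℝ) + (m.choose (r+1) : ℝ) := by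
  have := Nat.choose_succ_succ m r
  exact_mod_cast Nat.cast_inj.mpr this

noncomputable def fterm (k m i j : ℕ) : ℝ :=
  if j ≤ i then (-1:ℝ)^(m+i+j) * (k.choose j:ℝ)^2 * (m.choose (i-j):ℝ) else 0

noncomputable def gterm (k m i j : ℕ) : ℝ :=
  if j ≤ i+1 then (-1:ℝ)^(m+i+j) * (j:ℝ)^2 * (k.choose j:ℝ)^2 * ((m+1).choose (i+1-j):ℝ) else 0

noncomputable def c (k m i : ℕ) : ℝ := ∑ j ∈ Finset.range (k+1), fterm k m i j

lemma chpred (m : ℕ) (h : 1 ≤ m) : m.choose (m-1) = m := by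
  rw [← Nat.choose_symm (Nat.sub_le m 1), show m-(m-1)=1 by omega, Nat.choose_one_right]

lemma c_top (k m : ℕ) : c k m (k+m) = 1 := by
  rw [c, Finset.sum_eq_single_of_mem k (by simp)]
  · rw [fterm, if_pos (by omega), show k+m-k = m by omega, Nat.choose_self, Nat.choose_self,
      show m+(k+m)+k = 2*(m+k) by omega, pow_mul]
    norm_num
  · intro j hj hne
    have hj' : j < k + 1 := Finset.mem_range.mp hj
    rw [fterm, if_pos (by omega), Nat.choose_eq_zero_of_lt (show m < k+m-j by omega)]
    simp

lemma c_zero (k m : ℕ) : c k m 0 = (-1:ℝ)^m := by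
  rw [c, Finset.sum_eq_single_of_mem 0 (by simp)]
  · rw [fterm, if_pos (by omega)]; simp
  · intro j hj hne
    rw [fterm, if_neg (by omega)]

lemma c_subtop (k m : ℕ) (h : 1 ≤ k+m) : c k m (k+m-1) = (k:ℝ)^2 - m := by
  rcases k with _ | k'
  · -- k = 0
    rw [c, Finset.sum_range_one, fterm, if_pos (by omega)]
    simp only [Nat.choose_zero_right, Nat.zero_add, Nat.sub_zero, Nat.add_zero]
    rw [chpred m (by omega), show m+(m-1) = 2*(m-1)+1 by omega, pow_succ, pow_mul]
    push_cast
    norm_num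
  · rw [c, Finset.sum_range_succ, Finset.sum_range_succ, Finset.sum_eq_zero, zero_add]
    · have hterm1 : fterm (k'+1) m (k'+1+m-1) k' = ((k':ℝ)+1)^2 := by
        rw [fterm, if_pos (by omega), show k'+1+m-1-k' = m by omega, Nat.choose_self,
          show (k'+1).choose k' = k'+1 by simpa using chpred (k'+1) (by omega),
          show m+(k'+1+m-1)+k' = 2*(m+k') by omega, pow_mul]
        push_cast; norm_num
      rcases Nat.eq_zero_or_pos m with hm | hm
      · subst hm
        rw [hterm1, fterm, if_neg (by omega)]
        push_cast; ring
      · have hterm2 : fterm (k'+1) m (k'+1+m-1) (k'+1) = -(m:ℝ) := by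
          rw [fterm, if_pos (by omega), Nat.choose_self,
            show k'+1+m-1-(k'+1) = m-1 by omega, chpred m (by omega),
            show m+(k'+1+m-1)+(k'+1) = 2*(m+k')+1 by omega, pow_succ, pow_mul]
          push_cast; norm_num
        rw [hterm1, hterm2]
        push_cast; ring
    · intro j hj
      simp only [Finset.mem_range] at hj
      rw [fterm, if_pos (by omega), Nat.choose_eq_zero_of_lt (show m < k'+1+m-1-j by omega)]
      simp

lemma perj (k m i j : ℕ) (hjk : j ≤ k) :
    ((k:ℝ)+m-i)^2*((k:ℝ)+m-i-1) * fterm k m i j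
    - ((k:ℝ)*((k:ℝ)+1) - (2*((i:ℝ)+2)*((k:ℝ)+m-i) - ((k:ℝ)+m) - 2)) * ((k:ℝ)+m-i-1) * fterm k m (i+1) j
    + ((i:ℝ)+2)*(((i:ℝ)+3)*((k:ℝ)+m-i) - ((k:ℝ)+m) - 2) * fterm k m (i+2) j
    = ((k:ℝ)+m-i-1) * (gterm k m (i+1) (j+1) - gterm k m (i+1) j) := by
  have hs1 : (-1:ℝ)^(m+(i+1)+j) = -(-1:ℝ)^(m+i+j) := by
    rw [show m+(i+1)+j = (m+i+j)+1 by omega, pow_succ]; ring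
  have hs2 : (-1:ℝ)^(m+(i+2)+j) = (-1:ℝ)^(m+i+j) := by
    rw [show m+(i+2)+j = (m+i+j)+2 by omega, pow_add]; norm_num
  have hs3 : (-1:ℝ)^(m+(i+1)+(j+1)) = (-1:ℝ)^(m+i+j) := by
    rw [show m+(i+1)+(j+1) = (m+i+j)+2 by omega, pow_add]; norm_num
  rcases (show j ≤ i ∨ j = i+1 ∨ j = i+2 ∨ i+3 ≤ j by omega) with hj | hj | hj | hj
  · -- generic case
    rw [fterm, fterm, fterm, gterm, gterm,
      if_pos hj, if_pos (by omega), if_pos (by omega), if_pos (by omega), if_pos (by omega)]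
    rw [hs1, hs2, hs3]
    rw [show (i+1)+1-(j+1) = (i-j)+1 by omega, show i+2-j = ((i-j)+1)+1 by omega,
        show i+1-j = (i-j)+1 by omega]
    set q := (-1:ℝ)^(m+i+j) with hq
    set x := (k.choose j : ℝ) with hx
    set y := (k.choose (j+1) : ℝ) with hy
    set u0 := (m.choose (i-j) : ℝ) with hu0
    set u1 := (m.choose ((i-j)+1) : ℝ) with hu1
    set u2 := (m.choose (((i-j)+1)+1) : ℝ) with hu2
    set v1 := ((m+1).choose ((i-j)+1) : ℝ) with hv1
    set v2 := ((m+1).choose (((i-j)+1)+1) : ℝ) with hv2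
    have hij : ((i:ℝ) - j) = ((i-j : ℕ) : ℝ) := by push_cast [Nat.cast_sub hj]; ring
    have e1 : y * ((j:ℝ)+1) = x * ((k:ℝ) - j) := ch1 k j hjk
    have e2 : v1 * (((i:ℝ)-j)+1) = ((m:ℝ)+1) * u0 := by rw [hij]; exact ch2 m (i-j)
    have e3 : v2 * (((i:ℝ)-j)+2) = ((m:ℝ)+1) * u1 := by
      have := ch2 m ((i-j)+1); rw [hij]; push_cast at this ⊢; linarith
    have p1 : v1 = u0 + u1 := ch3 m (i-j)
    have p2 : v2 = u1 + u2 := ch3 m ((i-j)+1)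
    have hj1 : ((j:ℝ)+1) ≠ 0 := by positivity
    have hijr : (j:ℝ) ≤ i := by exact_mod_cast hj
    have hd1 : ((i:ℝ)-j)+1 ≠ 0 := by linarith
    have hd2 : ((i:ℝ)-j)+2 ≠ 0 := by linarith
    have hm1 : ((m:ℝ)+1) ≠ 0 := by positivity
    -- solve for y, v1, u1, v2, u2 in terms of x, u0
    have Hy : y = x * ((k:ℝ) - j) / ((j:ℝ)+1) := by field_simp at e1 ⊢; linarith
    have Hv1 : v1 = ((m:ℝ)+1) * u0 / (((i:ℝ)-j)+1) := by field_simp at e2 ⊢; linarith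
    have Hu1 : u1 = v1 - u0 := by linarith
    have Hv2 : v2 = ((m:ℝ)+1) * u1 / (((i:ℝ)-j)+2) := by field_simp at e3 ⊢; linarith
    have Hu2 : u2 = v2 - u1 := by linarith
    rw [Hu2, Hv2, Hu1, Hv1, Hy]
    field_simp
    push_cast
    ring
  · -- j = i+1
    subst hj
    rw [fterm, fterm, fterm, gterm, gterm,
      if_neg (by omega), if_pos (by omega), if_pos (by omega), if_pos (by omega), if_pos (by omega)]
    rw [hs1, hs2, hs3]
    rw [show (i+1)+1-((i+1)+1) = 0 by omega, show (i+2) - (i+1) = 1 by omega,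
        show (i+1) - (i+1) = 0 by omega]
    simp only [Nat.choose_zero_right, Nat.choose_one_right]
    set q := (-1:ℝ)^(m+i+(i+1)) with hq
    set x := (k.choose (i+1) : ℝ) with hx
    set y := (k.choose (i+1+1) : ℝ) with hy
    have e1 : y * (((i:ℕ):ℝ)+1+1) = x * ((k:ℝ) - (i+1)) := by
      have := ch1 k (i+1) hjk; push_cast at this ⊢; linarith
    have hd : ((i:ℝ)+1+1) ≠ 0 := by positivity
    have Hy : y = x * ((k:ℝ) - (i+1)) / ((i:ℝ)+1+1) := by field_simp at e1 ⊢; linarith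
    rw [Hy]
    push_cast
    field_simp
    ring
  · -- j = i+2
    subst hj
    rw [fterm, fterm, fterm, gterm, gterm,
      if_neg (by omega), if_neg (by omega), if_pos (by omega), if_neg (by omega), if_pos (by omega)]
    rw [hs2]
    rw [show (i+2) - (i+2) = 0 by omega]
    simp only [Nat.choose_zero_right]
    rw [hs1]
    push_cast
    ring
  · -- j ≥ i+3
    rw [fterm, fterm, fterm, gterm, gterm,
      if_neg (by omega), if_neg (by omega), if_neg (by omega), if_neg (by omega), if_neg (by omega)]
    ring

lemma crec (k m i : ℕ) :
    ((k:ℝ)+m-i)^2*((k:ℝ)+m-i-1) * c k m i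
    = ((k:ℝ)*((k:ℝ)+1) - (2*((i:ℝ)+2)*((k:ℝ)+m-i) - ((k:ℝ)+m) - 2)) * ((k:ℝ)+m-i-1) * c k m (i+1)
      - ((i:ℝ)+2)*(((i:ℝ)+3)*((k:ℝ)+m-i) - ((k:ℝ)+m) - 2) * c k m (i+2) := by
  have htel : ∑ j ∈ Finset.range (k+1), (gterm k m (i+1) (j+1) - gterm k m (i+1) j)
      = gterm k m (i+1) (k+1) - gterm k m (i+1) 0 :=
    Finset.sum_range_sub (fun j => gterm k m (i+1) j) (k+1)
  have hg0 : gterm k m (i+1) 0 = 0 := by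
    rw [gterm, if_pos (by omega)]; norm_num
  have hgtop : gterm k m (i+1) (k+1) = 0 := by
    rw [gterm]
    split
    · rw [Nat.choose_succ_self]; norm_num
    · rfl
  have hsum : ((k:ℝ)+m-i)^2*((k:ℝ)+m-i-1) * c k m i
      - ((k:ℝ)*((k:ℝ)+1) - (2*((i:ℝ)+2)*((k:ℝ)+m-i) - ((k:ℝ)+m) - 2)) * ((k:ℝ)+m-i-1) * c k m (i+1)
      + ((i:ℝ)+2)*(((i:ℝ)+3)*((k:ℝ)+m-i) - ((k:ℝ)+m) - 2) * c k m (i+2) = 0 := by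
    calc ((k:ℝ)+m-i)^2*((k:ℝ)+m-i-1) * c k m i
      - ((k:ℝ)*((k:ℝ)+1) - (2*((i:ℝ)+2)*((k:ℝ)+m-i) - ((k:ℝ)+m) - 2)) * ((k:ℝ)+m-i-1) * c k m (i+1)
      + ((i:ℝ)+2)*(((i:ℝ)+3)*((k:ℝ)+m-i) - ((k:ℝ)+m) - 2) * c k m (i+2)
        = ∑ j ∈ Finset.range (k+1),
          (((k:ℝ)+m-i)^2*((k:ℝ)+m-i-1) * fterm k m i j
           - ((k:ℝ)*((k:ℝ)+1) - (2*((i:ℝ)+2)*((k:ℝ)+m-i) - ((k:ℝ)+m) - 2)) * ((k:ℝ)+m-i-1) * fterm k m (i+1) j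
           + ((i:ℝ)+2)*(((i:ℝ)+3)*((k:ℝ)+m-i) - ((k:ℝ)+m) - 2) * fterm k m (i+2) j) := by
          rw [c, c, c, Finset.mul_sum, Finset.mul_sum, Finset.mul_sum,
            ← Finset.sum_sub_distrib, ← Finset.sum_add_distrib]
      _ = ∑ j ∈ Finset.range (k+1), ((k:ℝ)+m-i-1) * (gterm k m (i+1) (j+1) - gterm k m (i+1) j) :=
          Finset.sum_congr rfl (fun j hj => perj k m i j (by
            simp only [Finset.mem_range] at hj; omega))
      _ = ((k:ℝ)+m-i-1) * ∑ j ∈ Finset.range (k+1), (gterm k m (i+1) (j+1) - gterm k m (i+1) j) :=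
          (Finset.mul_sum _ _ _).symm
      _ = 0 := by rw [htel, hg0, hgtop]; ring
  linarith

/-- The tridiagonal matrix `A_M` of size `(M+1) × (M+1)`. -/
noncomputable def A (M : ℕ) : Matrix (Fin (M+1)) (Fin (M+1)) ℝ := fun i j =>
  if (i : ℕ) = (j : ℕ) then 2*(((i:ℕ):ℝ)+1)*((M:ℝ)+1-((i:ℕ):ℝ)) - M - 2
  else if (i : ℕ) + 1 = (j : ℕ) then
    ((j:ℕ):ℝ)*((((j:ℕ):ℝ)+1)*((M:ℝ)+2-((j:ℕ):ℝ)) - M - 2)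
  else if (j : ℕ) + 1 = (i : ℕ) then (M:ℝ)+1-((i:ℕ):ℝ)
  else 0

lemma row_mid (M : ℕ) (lam : ℝ) (α : Fin (M+1) → ℝ)
    (heig : (A M).mulVec α = lam • α) (i : ℕ) (h : i + 2 ≤ M) :
    ((M:ℝ) - i) * α ⟨i, by omega⟩
      + (2*((i:ℝ)+2)*((M:ℝ)-i) - M - 2) * α ⟨i+1, by omega⟩
      + (((i:ℝ)+2)*(((i:ℝ)+3)*((M:ℝ)-i) - M - 2)) * α ⟨i+2, by omega⟩
    = lam * α ⟨i+1, by omega⟩ := by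
  have h0 := congrFun heig ⟨i+1, by omega⟩
  simp only [Matrix.mulVec, dotProduct, Pi.smul_apply, smul_eq_mul] at h0
  rw [← Finset.sum_subset (Finset.subset_univ
      ({⟨i, by omega⟩, ⟨i+1, by omega⟩, ⟨i+2, by omega⟩} : Finset (Fin (M+1))))
      (fun x _ hx => ?_)] at h0
  · rw [Finset.sum_insert (by
        simp only [Finset.mem_insert, Finset.mem_singleton, Fin.mk.injEq]
        omega),
      Finset.sum_insert (by
        simp only [Finset.mem_singleton, Fin.mk.injEq]
        omega),
      Finset.sum_singleton] at h0
    have c1 : ¬(i + 1 = i) := by omega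
    have c2 : ¬(i + 1 + 1 = i) := by omega
    have c3 : i + 1 = i + 1 := rfl
    have c4 : ¬(i + 1 = i + 2) := by omega
    have c5 : i + 1 + 1 = i + 2 := rfl
    have e1 : A M ⟨i+1, by omega⟩ ⟨i, by omega⟩ = (M:ℝ) - i := by
      show (if i + 1 = i then _ else if i + 1 + 1 = i then _ else if i + 1 = i + 1 then ((M:ℝ)+1-((i+1:ℕ):ℝ)) else 0) = _
      rw [if_neg c1, if_neg c2, if_pos c3]
      push_cast; ring
    have e2 : A M ⟨i+1, by omega⟩ ⟨i+1, by omega⟩ = 2*((i:ℝ)+2)*((M:ℝ)-i) - M - 2 := by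
      show (if i + 1 = i + 1 then (2*(((i+1:ℕ):ℝ)+1)*((M:ℝ)+1-((i+1:ℕ):ℝ)) - M - 2) else _) = _
      rw [if_pos c3]
      push_cast; ring
    have e3 : A M ⟨i+1, by omega⟩ ⟨i+2, by omega⟩ = ((i:ℝ)+2)*(((i:ℝ)+3)*((M:ℝ)-i) - M - 2) := by
      show (if i + 1 = i + 2 then _ else if i + 1 + 1 = i + 2 then (((i+2:ℕ):ℝ)*((((i+2:ℕ):ℝ)+1)*((M:ℝ)+2-((i+2:ℕ):ℝ)) - M - 2)) else _) = _
      rw [if_neg c4, if_pos c5]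
      push_cast; ring
    rw [e1, e2, e3] at h0
    linarith
  · simp only [Finset.mem_insert, Finset.mem_singleton] at hx
    push_neg at hx
    have hx1 : (x : ℕ) ≠ i := fun hc => hx.1 (Fin.ext hc)
    have hx2 : (x : ℕ) ≠ i + 1 := fun hc => hx.2.1 (Fin.ext hc)
    have hx3 : (x : ℕ) ≠ i + 2 := fun hc => hx.2.2 (Fin.ext hc)
    have : A M ⟨i+1, by omega⟩ x = 0 := by
      show (if i + 1 = (x:ℕ) then _ else if i + 1 + 1 = (x:ℕ) then _ else if (x:ℕ) + 1 = i + 1 then _ else 0) = 0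
      rw [if_neg (by omega), if_neg (by omega), if_neg (by omega)]
    rw [this, zero_mul]

lemma row_top (M : ℕ) (lam : ℝ) (α : Fin (M+1) → ℝ)
    (heig : (A M).mulVec α = lam • α) (h : 1 ≤ M) :
    α ⟨M-1, by omega⟩ + (M:ℝ) * α ⟨M, by omega⟩ = lam * α ⟨M, by omega⟩ := by
  have h0 := congrFun heig ⟨M, by omega⟩
  simp only [Matrix.mulVec, dotProduct, Pi.smul_apply, smul_eq_mul] at h0
  rw [← Finset.sum_subset (Finset.subset_univ
      ({⟨M-1, by omega⟩, ⟨M, by omega⟩} : Finset (Fin (M+1))))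
      (fun x _ hx => ?_)] at h0
  · rw [Finset.sum_insert (by
        simp only [Finset.mem_singleton, Fin.mk.injEq]
        omega),
      Finset.sum_singleton] at h0
    have e1 : A M ⟨M, by omega⟩ ⟨M-1, by omega⟩ = 1 := by
      show (if M = M - 1 then _ else if M + 1 = M - 1 then _ else if M - 1 + 1 = M then ((M:ℝ)+1-((M:ℕ):ℝ)) else 0) = 1
      rw [if_neg (by omega), if_neg (by omega), if_pos (by omega)]
      push_cast; ring
    have e2 : A M ⟨M, by omega⟩ ⟨M, by omega⟩ = (M:ℝ) := by
      show (if M = M then (2*(((M:ℕ):ℝ)+1)*((M:ℝ)+1-((M:ℕ):ℝ)) - M - 2) else _) = _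
      rw [if_pos rfl]
      push_cast; ring
    rw [e1, e2, one_mul] at h0
    linarith
  · simp only [Finset.mem_insert, Finset.mem_singleton] at hx
    push_neg at hx
    have hx1 : (x : ℕ) ≠ M - 1 := fun hc => hx.1 (Fin.ext hc)
    have hx2 : (x : ℕ) ≠ M := fun hc => hx.2 (Fin.ext hc)
    have hxM : (x:ℕ) < M + 1 := x.isLt
    have : A M ⟨M, by omega⟩ x = 0 := by
      show (if M = (x:ℕ) then _ else if M + 1 = (x:ℕ) then _ else if (x:ℕ) + 1 = M then _ else 0) = 0
      rw [if_neg (by omega), if_neg (by omega), if_neg (by omega)]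
    rw [this, zero_mul]

/-- For each `0 ≤ k ≤ M`, the eigenvector `α` of `A_M` with eigenvalue `k(k+1)`
normalized so that `α_M = 1` has `α_0 = (-1)^{M-k} M!`. -/
theorem eigenvector_first_component (M k : ℕ) (hk : k ≤ M)
    (α : Fin (M+1) → ℝ)
    (heig : (A M).mulVec α = ((k : ℝ) * ((k : ℝ) + 1)) • α)
    (hnorm : α ⟨M, by omega⟩ = 1) :
    α ⟨0, by omega⟩ = (-1 : ℝ)^(M - k) * (Nat.factorial M : ℝ) := by
  obtain ⟨m, rfl⟩ : ∃ m, M = k + m := ⟨M - k, by omega⟩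
  have key : ∀ t, t ≤ k + m → α ⟨k + m - t, by omega⟩ = (Nat.factorial t : ℝ) * c k m (k+m-t) := by
    intro t
    induction t using Nat.strong_induction_on with
    | _ t ih =>
      match t with
      | 0 =>
        intro _
        simpa [Nat.factorial, c_top] using hnorm
      | 1 =>
        intro ht
        have hrow := row_top (k+m) ((k : ℝ) * ((k : ℝ) + 1)) α heig (by omega)
        rw [hnorm] at hrow
        rw [c_subtop k m (by omega)]
        push_cast
        push_cast at hrow
        simp only [Nat.factorial]
        push_cast
        linarith
      | (t+2) =>
        intro ht
        have h1 := ih (t+1) (by omega) (by omega)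
        have h2 := ih t (by omega) (by omega)
        have hieq : k + m - (t+2) + 2 ≤ k + m := by omega
        have hrow := row_mid (k+m) ((k : ℝ) * ((k : ℝ) + 1)) α heig (k+m-(t+2)) hieq
        have hidx1 : (⟨k+m-(t+2)+1, by omega⟩ : Fin (k+m+1)) = ⟨k+m-(t+1), by omega⟩ :=
          Fin.ext (by show k+m-(t+2)+1 = k+m-(t+1); omega)
        have hidx2 : (⟨k+m-(t+2)+2, by omega⟩ : Fin (k+m+1)) = ⟨k+m-t, by omega⟩ :=
          Fin.ext (by show k+m-(t+2)+2 = k+m-t; omega)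
        rw [hidx1, hidx2, h1, h2] at hrow
        have hcrec := crec k m (k+m-(t+2))
        rw [show k+m-(t+2)+1 = k+m-(t+1) by omega, show k+m-(t+2)+2 = k+m-t by omega] at hcrec
        have hir : ((k+m-(t+2) : ℕ):ℝ) = (k:ℝ) + m - ((t:ℝ)+2) := by
          have h' : (k+m-(t+2)) + (t+2) = k + m := by omega
          have h'' := congrArg (Nat.cast : ℕ → ℝ) h'
          push_cast at h''
          linarith
        rw [hir] at hrow hcrec
        push_cast [Nat.factorial_succ] at hrow hcrec ⊢
        have ht2 : ((t:ℝ)+2) ≠ 0 := by positivity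
        have hgoal2 : ((t:ℝ)+2) * α ⟨k+m-(t+2), by omega⟩
            = ((t:ℝ)+2) * ((((t:ℝ)+2) * (((t:ℝ)+1) * (Nat.factorial t : ℝ))) * c k m (k+m-(t+2))) := by
          linear_combination hrow - (Nat.factorial t : ℝ) * hcrec
        have hfin := mul_left_cancel₀ ht2 hgoal2
        rw [hfin]; ring
  have h0 := key (k+m) (le_refl _)
  have h00 : α ⟨0, by omega⟩ = ((k+m).factorial : ℝ) * c k m (k+m-(k+m)) := by
    rw [← h0]
    congr 1
    exact Fin.ext (by show 0 = k+m-(k+m); omega)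
  rw [show k + m - (k+m) = 0 by omega, c_zero] at h00
  rw [h00, show k + m - k = m by omega]
  ring
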